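/- Let L > 0 and let F : ℝ² → ℝ² be given by F(x,y) = (L y, −L x) (the saddle gradient of f(x,y) = L x y, whose unique zero is z_* = (0,0)). Then the FEG iterates with parameters L and ρ = 0 started from z₀ = (1,0) satisfy z_{4l+2} = (0, 1/(2l+1)) for all l ≥ 0; consequently ‖F z_{4l+2}‖² = L²/(2l+1)² = 4 L² ‖z₀ − z_*‖² / (4l+2)² for all l ≥ 0. -/

import Mathlib

open scoped RealInnerProductSpace

/-- **Exactness example for FEG** (Example 2 of the paper).
For `F(x,y) = (L y, -L x)`, the saddle gradient of `f(x,y) = L x y` with zero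
`z_* = (0,0)`, the FEG iterates with parameters `L` and `ρ = 0` started from
`z₀ = (1,0)` satisfy `z_{4l+2} = (0, 1/(2l+1))`, hence
`‖F z_{4l+2}‖² = L²/(2l+1)² = 4 L² ‖z₀ - z_*‖²/(4l+2)²` for all `l ≥ 0`. -/
theorem feg_worst_case_example
    (L : ℝ) (hL : 0 < L)
    (F : EuclideanSpace ℝ (Fin 2) → EuclideanSpace ℝ (Fin 2))
    (hF0 : ∀ v : EuclideanSpace ℝ (Fin 2), F v 0 = L * v 1)
    (hF1 : ∀ v : EuclideanSpace ℝ (Fin 2), F v 1 = -(L * v 0))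
    (z0 : EuclideanSpace ℝ (Fin 2)) (hz00 : z0 0 = 1) (hz01 : z0 1 = 0)
    (z w : ℕ → EuclideanSpace ℝ (Fin 2))
    (hz0 : z 0 = z0)
    (hw : ∀ k : ℕ, w k = z k + (((k : ℝ) + 1)⁻¹) • (z0 - z k)
      - ((1 - ((k : ℝ) + 1)⁻¹) * (1 / L + 2 * 0)) • F (z k))
    (hz : ∀ k : ℕ, z (k + 1) = z k + (((k : ℝ) + 1)⁻¹) • (z0 - z k)
      - (1 / L) • F (w k) - ((1 - ((k : ℝ) + 1)⁻¹) * (2 * 0)) • F (z k)) :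
    ∀ l : ℕ,
      z (4 * l + 2) 0 = 0 ∧
      z (4 * l + 2) 1 = 1 / (2 * (l : ℝ) + 1) ∧
      ‖F (z (4 * l + 2))‖ ^ 2 = L ^ 2 / (2 * (l : ℝ) + 1) ^ 2 ∧
      ‖F (z (4 * l + 2))‖ ^ 2
        = 4 * L ^ 2 * ‖z0 - (0 : EuclideanSpace ℝ (Fin 2))‖ ^ 2
          / (4 * (l : ℝ) + 2) ^ 2 := by
  have hL' : L ≠ 0 := hL.ne'
  have key : ∀ k : ℕ, z (k+1) 0 = ((k:ℝ)+1)⁻¹ - (1 - ((k:ℝ)+1)⁻¹) * z k 1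
      ∧ z (k+1) 1 = ((k:ℝ)+1)⁻¹ + (1 - ((k:ℝ)+1)⁻¹) * z k 0 := by
    intro k
    have hw0 := congrArg (fun v => v 0) (hw k)
    have hw1 := congrArg (fun v => v 1) (hw k)
    have hza := congrArg (fun v => v 0) (hz k)
    have hzb := congrArg (fun v => v 1) (hz k)
    simp only [PiLp.add_apply, PiLp.sub_apply, PiLp.smul_apply, smul_eq_mul,
      hF0, hF1, hz00, hz01] at hw0 hw1 hza hzb
    have hk : ((k:ℝ)+1) ≠ 0 := by positivity
    constructor
    · rw [hza, hw1]; field_simp; ring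
    · rw [hzb, hw0]; field_simp; ring
  have main : ∀ l : ℕ, z (4 * l + 2) 0 = 0 ∧ z (4 * l + 2) 1 = 1 / (2 * (l : ℝ) + 1) := by
    intro l
    induction l with
    | zero =>
      have h1 := key 0
      have h2 := key 1
      rw [hz0] at h1
      simp only [Nat.cast_zero, Nat.cast_one, hz00, hz01] at h1 h2
      norm_num at h1 h2 ⊢
      rw [h2.1, h2.2, h1.1, h1.2]; try norm_num
    | succ l ih =>
      obtain ⟨ha, hb⟩ := ih
      set n : ℕ := 4 * l + 2 with hn
      have hcast : ((n:ℝ)) = 4 * l + 2 := by simp [hn]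
      have h1 := key n
      have h2 := key (n+1)
      have h3 := key (n+2)
      have h4 := key (n+3)
      rw [ha, hb] at h1
      push_cast [hcast] at h1 h2 h3 h4
      have e1 : (4*(l:ℝ)+3) ≠ 0 := by positivity
      have e2 : (4*(l:ℝ)+4) ≠ 0 := by positivity
      have e3 : (4*(l:ℝ)+5) ≠ 0 := by positivity
      have e4 : (4*(l:ℝ)+6) ≠ 0 := by positivity
      have e5 : (2*(l:ℝ)+1) ≠ 0 := by positivity
      have p1a : z (n+1) 0 = -(1/(4*(l:ℝ)+3)) := by
        rw [h1.1]; field_simp; ring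
      have p1b : z (n+1) 1 = 1/(4*(l:ℝ)+3) := by
        rw [h1.2]; field_simp; try ring
      have p2a : z (n+2) 0 = 0 := by
        rw [h2.1, p1b]; field_simp; try ring
      have p2b : z (n+2) 1 = 0 := by
        rw [h2.2, p1a]; field_simp; try ring
      have p3a : z (n+3) 0 = 1/(4*(l:ℝ)+5) := by
        rw [h3.1, p2b]; field_simp; try ring
      have p3b : z (n+3) 1 = 1/(4*(l:ℝ)+5) := by
        rw [h3.2, p2a]; field_simp; try ring
      have heq : 4 * (l+1) + 2 = n + 4 := by omega
      rw [heq]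
      have p4a : z (n+4) 0 = 0 := by
        rw [h4.1, p3b]; field_simp; try ring
      have p4b : z (n+4) 1 = 1/(2*((l:ℝ)+1)+1) := by
        rw [h4.2, p3a]
        have : (2*((l:ℝ)+1)+1) ≠ 0 := by positivity
        field_simp; try ring
      push_cast
      exact ⟨p4a, by rw [p4b]⟩
  intro l
  obtain ⟨ha, hb⟩ := main l
  refine ⟨ha, hb, ?_, ?_⟩ <;>
  · have hnorm : ∀ v : EuclideanSpace ℝ (Fin 2), ‖v‖^2 = v 0 ^ 2 + v 1 ^ 2 := by
      intro v
      rw [EuclideanSpace.norm_eq, Real.sq_sqrt (by positivity)]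
      simp [Fin.sum_univ_two, sq_abs]
    have e5 : (2*(l:ℝ)+1) ≠ 0 := by positivity
    rw [hnorm, hF0, hF1, ha, hb]
    try rw [hnorm]
    simp only [PiLp.sub_apply, PiLp.zero_apply, hz00, hz01]
    field_simp
    try ring
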